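/- Let (V,ρ) be an anchored A-module with V finitely generated and projective over A, and let M be any A-module. Form M^* ⊗_A Σ_V^*, the tensor product balanced against the twisted left A-action on Σ_V^* and made into an A-module via the right A-action on Σ_V^*. Then: (1) the A-linear dual of the Atiyah sequence of M, namely 0 → (V ⊗_A M)^* → (Σ_V ⊗_A M)^* → M^* → 0 (maps obtained by precomposition), is a short exact sequence; (2) the sequence 0 → M^* ⊗_A V^* → M^* ⊗_A Σ_V^* → M^* → 0, with maps δ⊗θ ↦ δ⊗(θ,0) and δ⊗(θ,a) ↦ a•δ, is a short exact sequence; (3) the formula Θ(δ⊗(θ,b))((a,v)⊗m) = (b·a + θ(v))·δ(m) + b·ρ(v)(δ(m)) defines a well-defined A-linear isomorphism Θ : M^* ⊗_A Σ_V^* → (Σ_V ⊗_A M)^*, which, together with the canonical isomorphism M^* ⊗_A V^* ≅ (V ⊗_A M)^* and the identity of M^*, is an isomorphism between the short exact sequences of (2) and (1). -/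

import Mathlib

open TensorProduct

universe u

/-- For an anchored `A`-module `(V, ρ)` and `a ∈ A`, the `A`-linear form
`ρ^*(da) : V → A`, `v ↦ ρ(v)(a)`. -/
def rhoStar {k A V : Type*} [CommRing k] [CommRing A] [Algebra k A]
    [AddCommGroup V] [Module A V] (ρ : V →ₗ[A] Derivation k A A) (a : A) :
    V →ₗ[A] A where
  toFun v := ρ v a
  map_add' v w := by simp
  map_smul' c v := by simp

set_option maxHeartbeats 1600000

/-- Let `(V,ρ)` be an anchored `A`-module with `V` finitely generated projective, and `M`
any `A`-module.  Let `T` (with `tt`) be a realization of `Σ_V ⊗_A M` (balanced against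
the right `A`-action on the Atiyah bimodule `Σ_V = A × V`, with the `A`-module structure
induced by the left `A`-action), with Atiyah sequence `m ↦ tt (1,0) m` and projection
`piT`; and let `T2` (with `tt2`) be a realization of `M^* ⊗_A Σ_V^*` (balanced against
the twisted left `A`-action on `Σ_V^* = V^* × A`, with the `A`-module structure coming
from the natural right `A`-action), with the maps `map1 : δ⊗θ ↦ δ⊗(θ,0)` and
`map2 : δ⊗(θ,a) ↦ a•δ`, and let `canMap` be the canonical map
`M^* ⊗_A V^* → (V ⊗_A M)^*`.  Then:
(1) the `A`-linear dual of the Atiyah sequence of `M` is a short exact sequence;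
(2) the sequence `0 → M^* ⊗_A V^* → M^* ⊗_A Σ_V^* → M^* → 0` is a short exact sequence;
(3) the formula `Θ(δ⊗(θ,b))((a,v)⊗m) = (ba + θ(v))·δ(m) + b·ρ(v)(δ(m))` defines a
well-defined `A`-linear isomorphism `Θ : M^* ⊗_A Σ_V^* → (Σ_V ⊗_A M)^*` which, together
with the canonical isomorphism `M^* ⊗_A V^* ≅ (V ⊗_A M)^*` and the identity of `M^*`,
is an isomorphism between the short exact sequences of (2) and (1). -/
theorem stmt_9 (k A V M T T2 : Type u) [Field k] [CharZero k] [CommRing A] [Algebra k A]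
    [AddCommGroup V] [Module A V] [Module.Finite A V] [Module.Projective A V]
    [AddCommGroup M] [Module A M]
    [AddCommGroup T] [Module A T] [AddCommGroup T2] [Module A T2]
    (ρ : V →ₗ[A] Derivation k A A)
    -- `T` realizes `Σ_V ⊗_A M` with the `A`-structure from the left action on `Σ_V`
    (tt : (A × V) → M → T)
    (tt_addl : ∀ (s s' : A × V) (m : M), tt (s + s') m = tt s m + tt s' m)
    (tt_addr : ∀ (s : A × V) (m m' : M), tt s (m + m') = tt s m + tt s m')
    (tt_bal : ∀ (b a : A) (v : V) (m : M),
      tt (b * a + ρ v a, a • v) m = tt (b, v) (a • m))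
    (tt_mod : ∀ (a b : A) (v : V) (m : M), a • tt (b, v) m = tt (a * b, a • v) m)
    (tt_univ : ∀ (N : Type u) [AddCommGroup N] (f : (A × V) → M → N),
      (∀ (s s' : A × V) (m : M), f (s + s') m = f s m + f s' m) →
      (∀ (s : A × V) (m m' : M), f s (m + m') = f s m + f s m') →
      (∀ (b a : A) (v : V) (m : M), f (b * a + ρ v a, a • v) m = f (b, v) (a • m)) →
      ∃! F : T →+ N, ∀ s m, F (tt s m) = f s m)
    -- the two maps of the Atiyah sequence of `M`
    (unitT : M →ₗ[A] T) (hunit : ∀ m : M, unitT m = tt (1, 0) m)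
    (piT : T →ₗ[A] V ⊗[A] M)
    (hpi : ∀ (a : A) (v : V) (m : M), piT (tt (a, v) m) = v ⊗ₜ[A] m)
    -- `T2` realizes `M^* ⊗_A Σ_V^*`, balanced against the twisted left `A`-action on
    -- `Σ_V^*`, with the `A`-module structure from the natural right `A`-action
    (tt2 : Module.Dual A M → ((V →ₗ[A] A) × A) → T2)
    (tt2_addl : ∀ (δ δ' : Module.Dual A M) (x : (V →ₗ[A] A) × A),
      tt2 (δ + δ') x = tt2 δ x + tt2 δ' x)
    (tt2_addr : ∀ (δ : Module.Dual A M) (x x' : (V →ₗ[A] A) × A),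
      tt2 δ (x + x') = tt2 δ x + tt2 δ x')
    (tt2_bal : ∀ (a : A) (δ : Module.Dual A M) (θ : V →ₗ[A] A) (b : A),
      tt2 (a • δ) (θ, b) = tt2 δ (a • θ + b • rhoStar ρ a, a * b))
    (tt2_mod : ∀ (a : A) (δ : Module.Dual A M) (θ : V →ₗ[A] A) (b : A),
      a • tt2 δ (θ, b) = tt2 δ (a • θ, b * a))
    (tt2_univ : ∀ (N : Type u) [AddCommGroup N]
      (f : Module.Dual A M → ((V →ₗ[A] A) × A) → N),
      (∀ δ δ' x, f (δ + δ') x = f δ x + f δ' x) →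
      (∀ δ x x', f δ (x + x') = f δ x + f δ x') →
      (∀ (a : A) (δ : Module.Dual A M) (θ : V →ₗ[A] A) (b : A),
        f (a • δ) (θ, b) = f δ (a • θ + b • rhoStar ρ a, a * b)) →
      ∃! F : T2 →+ N, ∀ δ x, F (tt2 δ x) = f δ x)
    -- the two maps of the sequence (2)
    (map1 : (Module.Dual A M) ⊗[A] (V →ₗ[A] A) →ₗ[A] T2)
    (hmap1 : ∀ (δ : Module.Dual A M) (θ : V →ₗ[A] A), map1 (δ ⊗ₜ[A] θ) = tt2 δ (θ, 0))
    (map2 : T2 →ₗ[A] Module.Dual A M)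
    (hmap2 : ∀ (δ : Module.Dual A M) (θ : V →ₗ[A] A) (b : A),
      map2 (tt2 δ (θ, b)) = b • δ)
    -- the canonical map `M^* ⊗_A V^* → (V ⊗_A M)^*`
    (canMap : (Module.Dual A M) ⊗[A] (V →ₗ[A] A) →ₗ[A] Module.Dual A (V ⊗[A] M))
    (hcan : ∀ (δ : Module.Dual A M) (θ : V →ₗ[A] A) (v : V) (m : M),
      canMap (δ ⊗ₜ[A] θ) (v ⊗ₜ[A] m) = θ v * δ m) :
    -- (1) the dual of the Atiyah sequence is exact
    (Function.Injective piT.dualMap ∧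
      (∀ g : Module.Dual A T, unitT.dualMap g = 0 ↔ g ∈ LinearMap.range piT.dualMap) ∧
      Function.Surjective unitT.dualMap) ∧
    -- (2) the sequence `0 → M^* ⊗_A V^* → M^* ⊗_A Σ_V^* → M^* → 0` is exact
    (Function.Injective map1 ∧
      (∀ y : T2, map2 y = 0 ↔ y ∈ LinearMap.range map1) ∧
      Function.Surjective map2) ∧
    -- (3) `Θ` is a well-defined `A`-linear isomorphism of short exact sequences
    (∃ Θ : T2 →ₗ[A] Module.Dual A T,
      (∀ (δ : Module.Dual A M) (θ : V →ₗ[A] A) (b a : A) (v : V) (m : M),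
        Θ (tt2 δ (θ, b)) (tt (a, v) m) = (b * a + θ v) * δ m + b * ρ v (δ m)) ∧
      Function.Bijective Θ ∧ Function.Bijective canMap ∧
      (∀ x : (Module.Dual A M) ⊗[A] (V →ₗ[A] A),
        Θ (map1 x) = piT.dualMap (canMap x)) ∧
      (∀ y : T2, unitT.dualMap (Θ y) = map2 y)) := by

  classical
  -- ## dual basis for V
  obtain ⟨n, fV, hfV⟩ := Module.Finite.exists_fin' A V
  obtain ⟨gV, hgV⟩ := fV.exists_rightInverse_of_surjective (LinearMap.range_eq_top.2 hfV)
  set xB : Fin n → V := fun i => fV (fun j => if i = j then (1:A) else 0) with hxB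
  set cB : Fin n → (V →ₗ[A] A) := fun i => (LinearMap.proj i).comp gV with hcB
  have hdual : ∀ v : V, ∑ i, cB i v • xB i = v := by
    intro v
    have : ∑ i, cB i v • xB i
        = fV (∑ i, gV v i • (fun j => if i = j then (1:A) else 0)) := by
      rw [map_sum]; simp [hxB, hcB, map_smul]
    rw [this, ← pi_eq_sum_univ (gV v)]
    exact LinearMap.congr_fun hgV v
  have Dsum : ∀ (s : Finset (Fin n)) (D : Fin n → Derivation k A A) (a : A),
      (∑ i ∈ s, D i) a = ∑ i ∈ s, D i a := by
    intro s D a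
    induction s using Finset.induction with
    | empty => simp only [Finset.sum_empty, Derivation.zero_apply]
    | insert _ _ h ih =>
        simp only [Finset.sum_insert h, Derivation.add_apply, ih]
  have hrhosum : ∀ (v : V) (a : A), ρ v a = ∑ i, cB i v * ρ (xB i) a := by
    intro v a
    conv_lhs => rw [← hdual v, map_sum]
    rw [Dsum]
    simp [smul_eq_mul]
  -- ## extensionality lemmas for T and T2
  have tt_zero : ∀ m : M, tt 0 m = 0 := by
    intro m
    have := tt_addl 0 0 m
    rw [add_zero] at this
    exact (left_eq_add.mp this)
  have tt2_zero : ∀ x, tt2 0 x = 0 := by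
    intro x
    have := tt2_addl 0 0 x
    rw [add_zero] at this
    exact (left_eq_add.mp this)
  have tt_ext : ∀ (N : Type u) [AddCommGroup N] (F G : T →+ N),
      (∀ s m, F (tt s m) = G (tt s m)) → F = G := by
    intro N _ F G h
    obtain ⟨F₀, hF₀, huniq⟩ := tt_univ N (fun s m => F (tt s m))
      (fun s s' m => by simp only [tt_addl, map_add])
      (fun s m m' => by simp only [tt_addr, map_add])
      (fun b a v m => by simp only [tt_bal])
    rw [huniq F (fun s m => rfl), huniq G (fun s m => (h s m).symm)]
  have ttL_ext : ∀ {N : Type u} [AddCommGroup N] [Module A N] (F G : T →ₗ[A] N),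
      (∀ s m, F (tt s m) = G (tt s m)) → F = G := by
    intro N _ _ F G h
    have := tt_ext N F.toAddMonoidHom G.toAddMonoidHom h
    ext t
    exact congrArg (fun (F : T →+ N) => F t) this
  have tt2_ext : ∀ (N : Type u) [AddCommGroup N] (F G : T2 →+ N),
      (∀ δ x, F (tt2 δ x) = G (tt2 δ x)) → F = G := by
    intro N _ F G h
    obtain ⟨F₀, hF₀, huniq⟩ := tt2_univ N (fun δ x => F (tt2 δ x))
      (fun δ δ' x => by simp only [tt2_addl, map_add])
      (fun δ x x' => by simp only [tt2_addr, map_add])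
      (fun a δ θ b => by simp only [tt2_bal])
    rw [huniq F (fun δ x => rfl), huniq G (fun δ x => (h δ x).symm)]
  -- ## the connection lam
  set lam : V → A := fun v => ∑ i, ρ (xB i) (gV v i) with hlam
  have lam_add : ∀ v w, lam (v + w) = lam v + lam w := by
    intro v w; simp [hlam, Finset.sum_add_distrib]
  have lam_smul : ∀ (a : A) (v : V), lam (a • v) = a * lam v + ρ v a := by
    intro a v
    rw [hrhosum v a, hlam]
    simp only [map_smul, Pi.smul_apply, smul_eq_mul, Derivation.leibniz]
    rw [Finset.mul_sum, ← Finset.sum_add_distrib]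
    refine Finset.sum_congr rfl fun i _ => ?_
    rfl

  -- ## the additive splitting sT : V ⊗ M →+ T
  have hmkadd : ∀ (v w : V) (m : M),
      tt (lam (v + w), v + w) m = tt (lam v, v) m + tt (lam w, w) m := by
    intro v w m
    rw [lam_add]
    have : ((lam v + lam w, v + w) : A × V) = (lam v, v) + (lam w, w) := by
      simp [Prod.ext_iff]
    rw [this, tt_addl]
  set sBil : V →+ M →+ T := AddMonoidHom.mk'
    (fun v => AddMonoidHom.mk' (fun m => tt (lam v, v) m) (tt_addr _))
    (by intro v w; ext m; exact hmkadd v w m) with hsBil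
  have hsbal : ∀ (a : A) (v : V) (m : M), sBil (a • v) m = sBil v (a • m) := by
    intro a v m
    show tt (lam (a • v), a • v) m = tt (lam v, v) (a • m)
    rw [lam_smul, mul_comm a (lam v), tt_bal]
  set sT : V ⊗[A] M →+ T := TensorProduct.liftAddHom sBil hsbal with hsT
  have hsT_tmul : ∀ (v : V) (m : M), sT (v ⊗ₜ[A] m) = tt (lam v, v) m := by
    intro v m; simp [hsT, hsBil, TensorProduct.liftAddHom_tmul]
  have hs : ∀ z : V ⊗[A] M, piT (sT z) = z := by
    intro z
    induction z with
    | zero => simp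
    | tmul v m => rw [hsT_tmul, hpi]
    | add z w hz hw => rw [map_add, map_add, hz, hw]
  have piT_surj : Function.Surjective piT := fun z => ⟨sT z, hs z⟩
  -- ## splitting generators
  have tt_scal : ∀ (c : A) (m : M), tt (c, 0) m = c • tt (1, 0) m := by
    intro c m
    rw [tt_mod]
    simp
  have tt_split : ∀ (a : A) (v : V) (m : M),
      tt (a, v) m = tt (lam v, v) m + (a - lam v) • tt (1, 0) m := by
    intro a v m
    rw [← tt_scal, ← tt_addl]
    have : ((lam v, v) : A × V) + (a - lam v, 0) = (a, v) := by
      simp [Prod.ext_iff]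
    rw [this]
  -- ## factorization through piT
  have hfact : ∀ gg : Module.Dual A T, ∃ h : Module.Dual A (V ⊗[A] M),
      (∀ m : M, gg (tt (1, 0) m) = 0) → ∀ t : T, h (piT t) = gg t := by
    intro gg
    by_cases hz : ∀ m : M, gg (tt (1, 0) m) = 0
    · set h₀ : V ⊗[A] M →+ A := gg.toAddMonoidHom.comp sT with hh₀
      have hval : ∀ (v : V) (m : M), h₀ (v ⊗ₜ[A] m) = gg (tt (lam v, v) m) := by
        intro v m
        show gg (sT (v ⊗ₜ[A] m)) = _
        rw [hsT_tmul]
      have hsm : ∀ (a : A) (z : V ⊗[A] M), h₀ (a • z) = a * h₀ z := by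
        intro a z
        induction z with
        | zero => simp
        | tmul v m =>
            rw [smul_tmul', hval, hval, lam_smul]
            have e : ((a * lam v + ρ v a, a • v) : A × V)
                = (a * lam v, a • v) + (ρ v a, 0) := by simp [Prod.ext_iff]
            rw [e, tt_addl, ← tt_mod, tt_scal, map_add, map_smul, map_smul,
              hz m, smul_zero, add_zero, smul_eq_mul]
        | add z w hz' hw' =>
            rw [smul_add, map_add, map_add, mul_add, hz', hw']
      refine ⟨{ toFun := ⇑h₀, map_add' := h₀.map_add, map_smul' := fun a z => hsm a z },
        fun _ t => ?_⟩
      have key := tt_ext A (h₀.comp piT.toAddMonoidHom) gg.toAddMonoidHom ?_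
      · exact congrArg (fun (F : T →+ A) => F t) key
      · rintro ⟨a, v⟩ m
        show h₀ (piT (tt (a, v) m)) = gg (tt (a, v) m)
        rw [hpi, hval, tt_split a v m, map_add, map_smul, hz m, smul_zero, add_zero]
    · exact ⟨0, fun h' => absurd h' hz⟩

  choose fact2 hfact2 using hfact
  -- ## the maps Phi δ θ b : Dual A T
  have hPhiEx : ∀ (δ : Module.Dual A M) (θ : V →ₗ[A] A) (β : A),
      ∃ F : Module.Dual A T, ∀ (s : A × V) (m : M),
        F (tt s m) = (β * s.1 + θ s.2) * δ m + β * ρ s.2 (δ m) := by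
    intro δ θ β
    obtain ⟨F₀, hF₀, _⟩ := tt_univ A
      (fun s m => (β * s.1 + θ s.2) * δ m + β * ρ s.2 (δ m))
      (by
        rintro ⟨a, v⟩ ⟨a', v'⟩ m
        simp only [Prod.mk_add_mk, map_add, Derivation.add_apply]
        ring)
      (by
        rintro ⟨a, v⟩ m m'
        simp only [map_add]
        ring)
      (by
        intro b a v m
        simp only [map_smul, LinearMap.smul_apply, smul_eq_mul,
          Derivation.smul_apply, Derivation.leibniz]
        ring)
    have hlin : ∀ (a' : A) (t : T), F₀ (a' • t) = a' * F₀ t := by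
      intro a' t
      have key := tt_ext A (F₀.comp (DistribMulAction.toAddMonoidHom T a'))
        ((AddMonoidHom.mulLeft a').comp F₀) ?_
      · exact congrArg (fun (F : T →+ A) => F t) key
      · rintro ⟨a, v⟩ m
        show F₀ (a' • tt (a, v) m) = a' * F₀ (tt (a, v) m)
        rw [tt_mod, hF₀, hF₀]
        simp only [map_smul, LinearMap.smul_apply, smul_eq_mul, Derivation.smul_apply]
        ring
    exact ⟨{ toFun := ⇑F₀, map_add' := F₀.map_add,
             map_smul' := fun a t => hlin a t }, fun s m => hF₀ s m⟩
  choose Phi hPhi using hPhiEx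
  -- ## the map Θ
  obtain ⟨Θ₀, hΘ₀, _⟩ := tt2_univ (Module.Dual A T) (fun δ x => Phi δ x.1 x.2)
    (by
      rintro δ δ' ⟨θ, b⟩
      refine ttL_ext _ _ fun s m => ?_
      simp only [LinearMap.add_apply, hPhi, map_add]
      ring)
    (by
      rintro δ ⟨θ, b⟩ ⟨θ', b'⟩
      refine ttL_ext _ _ fun s m => ?_
      simp only [Prod.mk_add_mk, LinearMap.add_apply, hPhi]
      ring)
    (by
      intro a δ θ b
      refine ttL_ext _ _ fun s m => ?_
      have hrhoStar : ∀ (a' : A) (v : V), rhoStar ρ a' v = ρ v a' := fun _ _ => rfl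
      simp only [hPhi, LinearMap.add_apply, LinearMap.smul_apply, smul_eq_mul,
        Derivation.leibniz, hrhoStar]
      ring)
  have Θlin : ∀ (a : A) (y : T2), Θ₀ (a • y) = a • Θ₀ y := by
    intro a y
    have key := tt2_ext (Module.Dual A T)
      (Θ₀.comp (DistribMulAction.toAddMonoidHom T2 a))
      ((DistribMulAction.toAddMonoidHom (Module.Dual A T) a).comp Θ₀) ?_
    · exact congrArg (fun (F : T2 →+ Module.Dual A T) => F y) key
    · rintro δ ⟨θ, b⟩
      show Θ₀ (a • tt2 δ (θ, b)) = a • Θ₀ (tt2 δ (θ, b))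
      rw [tt2_mod, hΘ₀, hΘ₀]
      refine ttL_ext _ _ fun s m => ?_
      simp only [hPhi, LinearMap.smul_apply, smul_eq_mul]
      ring
  set ΘL : T2 →ₗ[A] Module.Dual A T :=
    { toFun := ⇑Θ₀, map_add' := Θ₀.map_add, map_smul' := fun a y => Θlin a y } with hΘL
  have hΘ : ∀ (δ : Module.Dual A M) (θ : V →ₗ[A] A) (b : A) (s : A × V) (m : M),
      ΘL (tt2 δ (θ, b)) (tt s m) = (b * s.1 + θ s.2) * δ m + b * ρ s.2 (δ m) := by
    intro δ θ b s m
    show Θ₀ (tt2 δ (θ, b)) (tt s m) = _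
    rw [hΘ₀, hPhi]

  -- ## inverse of canMap
  set cInv : Module.Dual A (V ⊗[A] M) →ₗ[A] Module.Dual A M ⊗[A] (V →ₗ[A] A) :=
    { toFun := fun h => ∑ i, (h ∘ₗ TensorProduct.mk A V M (xB i)) ⊗ₜ[A] cB i,
      map_add' := fun h h' => by
        simp only [LinearMap.add_comp, TensorProduct.add_tmul, Finset.sum_add_distrib],
      map_smul' := fun a h => by
        simp only [RingHom.id_apply, LinearMap.smul_comp, Finset.smul_sum,
          TensorProduct.smul_tmul'] } with hcInv
  have hcInv_apply : ∀ h : Module.Dual A (V ⊗[A] M),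
      cInv h = ∑ i, (h ∘ₗ TensorProduct.mk A V M (xB i)) ⊗ₜ[A] cB i := fun h => rfl
  have hcanInv1 : ∀ h : Module.Dual A (V ⊗[A] M), canMap (cInv h) = h := by
    intro h
    refine TensorProduct.ext' fun v m => ?_
    rw [hcInv_apply, map_sum, LinearMap.sum_apply]
    rw [Finset.sum_congr rfl fun i _ => hcan (h ∘ₗ TensorProduct.mk A V M (xB i)) (cB i) v m]
    conv_rhs => rw [← hdual v, TensorProduct.sum_tmul]
    rw [map_sum]
    refine Finset.sum_congr rfl fun i _ => ?_
    rw [← TensorProduct.smul_tmul', map_smul, smul_eq_mul]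
    rfl
  have hcanInv2 : ∀ z : Module.Dual A M ⊗[A] (V →ₗ[A] A), cInv (canMap z) = z := by
    have key : cInv ∘ₗ canMap = LinearMap.id := by
      refine TensorProduct.ext' fun δ θ => ?_
      show cInv (canMap (δ ⊗ₜ[A] θ)) = δ ⊗ₜ[A] θ
      rw [hcInv_apply]
      have e1 : ∀ i, canMap (δ ⊗ₜ[A] θ) ∘ₗ TensorProduct.mk A V M (xB i)
          = θ (xB i) • δ := by
        intro i
        ext m
        show canMap (δ ⊗ₜ[A] θ) (xB i ⊗ₜ[A] m) = (θ (xB i) • δ) m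
        rw [hcan, LinearMap.smul_apply, smul_eq_mul]
      rw [Finset.sum_congr rfl fun i _ => by rw [e1 i]]
      have e2 : ∀ i, (θ (xB i) • δ) ⊗ₜ[A] cB i = δ ⊗ₜ[A] (θ (xB i) • cB i) := by
        intro i
        rw [TensorProduct.smul_tmul]
      rw [Finset.sum_congr rfl fun i _ => e2 i, ← TensorProduct.tmul_sum]
      congr 1
      ext v
      simp only [LinearMap.coe_sum, Finset.sum_apply, LinearMap.smul_apply, smul_eq_mul]
      conv_rhs => rw [← hdual v, map_sum]
      refine Finset.sum_congr rfl fun i _ => ?_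
      rw [map_smul, smul_eq_mul, mul_comm]
    exact fun z => LinearMap.congr_fun key z
  -- ## the commuting squares
  have hsquare : ∀ z : Module.Dual A M ⊗[A] (V →ₗ[A] A),
      ΘL (map1 z) = piT.dualMap (canMap z) := by
    have key : ΘL ∘ₗ map1 = piT.dualMap ∘ₗ canMap := by
      refine TensorProduct.ext' fun δ θ => ?_
      show ΘL (map1 (δ ⊗ₜ[A] θ)) = piT.dualMap (canMap (δ ⊗ₜ[A] θ))
      rw [hmap1]
      refine ttL_ext _ _ fun s m => ?_
      obtain ⟨a, v⟩ := s
      rw [hΘ δ θ 0 (a, v) m, LinearMap.dualMap_apply, hpi, hcan]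
      ring
    exact fun z => LinearMap.congr_fun key z
  have h3e : ∀ y : T2, unitT.dualMap (ΘL y) = map2 y := by
    have key := tt2_ext (Module.Dual A M)
      ((unitT.dualMap ∘ₗ ΘL).toAddMonoidHom) (map2.toAddMonoidHom) ?_
    · exact fun y => congrArg (fun (F : T2 →+ Module.Dual A M) => F y) key
    · rintro δ ⟨θ, b⟩
      show unitT.dualMap (ΘL (tt2 δ (θ, b))) = map2 (tt2 δ (θ, b))
      rw [hmap2]
      ext m
      rw [LinearMap.dualMap_apply, hunit, hΘ δ θ b (1, 0) m]
      simp only [map_zero, Derivation.zero_apply, LinearMap.smul_apply, smul_eq_mul]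
      ring

  -- ## key evaluation facts
  have k1 : ∀ gg : Module.Dual A T, ∀ m : M,
      ΘL (tt2 (gg ∘ₗ unitT) (0, 1)) (tt (1, 0) m) = gg (tt (1, 0) m) := by
    intro gg m
    rw [hΘ (gg ∘ₗ unitT) 0 1 (1, 0) m]
    simp only [LinearMap.zero_apply, map_zero, Derivation.zero_apply, LinearMap.comp_apply]
    rw [hunit]
    ring
  have k2 : ∀ gg : Module.Dual A T, ∀ m : M,
      (gg - ΘL (tt2 (gg ∘ₗ unitT) (0, 1))) (tt (1, 0) m) = 0 := by
    intro gg m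
    rw [LinearMap.sub_apply, k1, sub_self]
  set Θinv : Module.Dual A T → T2 := fun gg =>
    tt2 (gg ∘ₗ unitT) (0, 1)
      + map1 (cInv (fact2 (gg - ΘL (tt2 (gg ∘ₗ unitT) (0, 1))))) with hΘinvdef
  -- ## ΘL ∘ Θinv = id
  have P1 : ∀ gg : Module.Dual A T, ΘL (Θinv gg) = gg := by
    intro gg
    set g' : Module.Dual A T := gg - ΘL (tt2 (gg ∘ₗ unitT) (0, 1)) with hg'
    have hfac : ∀ t : T, fact2 g' (piT t) = g' t := hfact2 g' (k2 gg)
    have hdg : piT.dualMap (fact2 g') = g' := by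
      ext t
      rw [LinearMap.dualMap_apply, hfac]
    rw [hΘinvdef]
    show ΘL (tt2 (gg ∘ₗ unitT) (0, 1) + map1 (cInv (fact2 g'))) = gg
    rw [map_add, hsquare, hcanInv1, hdg, hg', add_sub_cancel]
  -- ## Θinv ∘ ΘL = id
  have fact2_add : ∀ g1 g2 : Module.Dual A T,
      (∀ m, g1 (tt (1, 0) m) = 0) → (∀ m, g2 (tt (1, 0) m) = 0) →
      fact2 (g1 + g2) = fact2 g1 + fact2 g2 := by
    intro g1 g2 h1 h2
    have h12 : ∀ m, (g1 + g2) (tt (1, 0) m) = 0 := by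
      intro m; rw [LinearMap.add_apply, h1, h2, add_zero]
    refine LinearMap.ext fun z => ?_
    obtain ⟨t, rfl⟩ := piT_surj z
    rw [hfact2 (g1 + g2) h12, LinearMap.add_apply, LinearMap.add_apply,
      hfact2 g1 h1, hfact2 g2 h2]
  have Θinv_add : ∀ g g' : Module.Dual A T, Θinv (g + g') = Θinv g + Θinv g' := by
    intro g g'
    have hcomp : (g + g') ∘ₗ unitT = g ∘ₗ unitT + g' ∘ₗ unitT := by
      ext m; simp
    have hG1add : ΘL (tt2 ((g + g') ∘ₗ unitT) (0, 1))
        = ΘL (tt2 (g ∘ₗ unitT) (0, 1)) + ΘL (tt2 (g' ∘ₗ unitT) (0, 1)) := by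
      rw [hcomp, tt2_addl, map_add]
    have hrearr : (g + g') - ΘL (tt2 ((g + g') ∘ₗ unitT) (0, 1))
        = (g - ΘL (tt2 (g ∘ₗ unitT) (0, 1))) + (g' - ΘL (tt2 (g' ∘ₗ unitT) (0, 1))) := by
      rw [hG1add]; abel
    simp only [hΘinvdef]
    rw [hrearr, fact2_add _ _ (k2 g) (k2 g'), hcomp, tt2_addl, map_add cInv, map_add map1]
    abel
  have P2 : ∀ y : T2, Θinv (ΘL y) = y := by
    have key := tt2_ext T2
      (AddMonoidHom.mk' (fun y => Θinv (ΘL y)) (by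
        intro y y'
        show Θinv (ΘL (y + y')) = Θinv (ΘL y) + Θinv (ΘL y')
        rw [map_add, Θinv_add]))
      (AddMonoidHom.id T2) ?_
    · exact fun y => congrArg (fun (F : T2 →+ T2) => F y) key
    · rintro δ ⟨θ, b⟩
      show Θinv (ΘL (tt2 δ (θ, b))) = tt2 δ (θ, b)
      have step1 : ΘL (tt2 δ (θ, b)) ∘ₗ unitT = b • δ := by
        ext m
        rw [LinearMap.comp_apply, hunit, hΘ δ θ b (1, 0) m]
        simp only [map_zero, Derivation.zero_apply, LinearMap.smul_apply, smul_eq_mul]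
        ring
      have step2 : fact2 (ΘL (tt2 δ (θ, b))
            - ΘL (tt2 (ΘL (tt2 δ (θ, b)) ∘ₗ unitT) (0, 1)))
          = canMap (δ ⊗ₜ[A] (θ - rhoStar ρ b)) := by
        refine TensorProduct.ext' fun v m => ?_
        have hrhs : canMap (δ ⊗ₜ[A] (θ - rhoStar ρ b)) (v ⊗ₜ[A] m)
            = (θ v - ρ v b) * δ m := by
          rw [hcan]
          have : (θ - rhoStar ρ b) v = θ v - ρ v b := rfl
          rw [this]
        rw [hrhs]
        have hv : (v : V) ⊗ₜ[A] m = piT (tt (0, v) m) := (hpi 0 v m).symm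
        rw [hv, hfact2 _ (k2 (ΘL (tt2 δ (θ, b)))), LinearMap.sub_apply, step1,
          hΘ δ θ b (0, v) m, hΘ (b • δ) 0 1 (0, v) m]
        simp only [LinearMap.zero_apply, LinearMap.smul_apply, smul_eq_mul,
          Derivation.leibniz]
        ring
      have step3 : tt2 (b • δ) ((0 : V →ₗ[A] A), (1 : A)) = tt2 δ (rhoStar ρ b, b) := by
        rw [tt2_bal b δ 0 1]
        congr 1
        simp
      simp only [hΘinvdef]
      rw [step2, hcanInv2, hmap1, step1, step3, ← tt2_addr]
      congr 1
      simp [Prod.ext_iff]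
  have Θbij : Function.Bijective ΘL :=
    ⟨fun y y' h => by rw [← P2 y, ← P2 y', h], fun gg => ⟨Θinv gg, P1 gg⟩⟩
  have canbij : Function.Bijective canMap :=
    ⟨fun z z' h => by rw [← hcanInv2 z, ← hcanInv2 z', h], fun h => ⟨cInv h, hcanInv1 h⟩⟩
  -- ## exactness of the dual Atiyah sequence
  have inj1 : Function.Injective piT.dualMap := by
    intro g g' h
    refine LinearMap.ext fun z => ?_
    obtain ⟨t, rfl⟩ := piT_surj z
    have := LinearMap.congr_fun h t
    rwa [LinearMap.dualMap_apply, LinearMap.dualMap_apply] at this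
  have mid1 : ∀ g : Module.Dual A T,
      unitT.dualMap g = 0 ↔ g ∈ LinearMap.range piT.dualMap := by
    intro g
    constructor
    · intro h0
      have hz : ∀ m, g (tt (1, 0) m) = 0 := by
        intro m
        rw [← hunit]
        exact LinearMap.congr_fun h0 m
      refine ⟨fact2 g, ?_⟩
      ext t
      rw [LinearMap.dualMap_apply, hfact2 g hz t]
    · rintro ⟨h, rfl⟩
      ext m
      rw [LinearMap.dualMap_apply, LinearMap.dualMap_apply, hunit, hpi]
      simp [TensorProduct.zero_tmul]
  have surj1 : Function.Surjective unitT.dualMap := by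
    intro φ
    refine ⟨ΘL (tt2 φ (0, 1)), ?_⟩
    rw [h3e, hmap2]
    exact one_smul A φ
  -- ## exactness of the second sequence
  have inj2 : Function.Injective map1 := by
    intro z z' h
    have h2 := congrArg ΘL h
    rw [hsquare, hsquare] at h2
    have h3 := inj1 h2
    rw [← hcanInv2 z, ← hcanInv2 z', h3]
  have surj2 : Function.Surjective map2 := by
    intro φ
    exact ⟨tt2 φ (0, 1), by rw [hmap2]; exact one_smul A φ⟩
  have mid2 : ∀ y : T2, map2 y = 0 ↔ y ∈ LinearMap.range map1 := by
    intro y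
    rw [← h3e y]
    constructor
    · intro h
      obtain ⟨h', hh⟩ := (mid1 (ΘL y)).mp h
      refine ⟨cInv h', ?_⟩
      apply Θbij.injective
      rw [hsquare, hcanInv1, hh]
    · rintro ⟨z, rfl⟩
      rw [hsquare]
      ext m
      rw [LinearMap.dualMap_apply, LinearMap.dualMap_apply, hunit, hpi]
      simp [TensorProduct.zero_tmul]
  exact ⟨⟨inj1, mid1, surj1⟩, ⟨inj2, mid2, surj2⟩,
    ⟨ΘL, fun δ θ b a v m => hΘ δ θ b (a, v) m, Θbij, canbij,
      fun x => hsquare x, fun y => h3e y⟩⟩
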